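/- Let g be a finite-dimensional real Lie algebra admitting a cyclic inner product. If g is nonabelian, then g is not the Lie algebra of a compact Lie group; equivalently, g is not a compact Lie algebra (a direct sum of its center and a semisimple ideal with negative definite Killing form). -/

import Mathlib

open LieAlgebra

private lemma sum_cyc {ι : Type*} [Fintype ι] (g : ι → ι → ι → ℝ) :
    ∑ i, ∑ j, ∑ k, g j k i = ∑ i, ∑ j, ∑ k, g i j k := by
  rw [Finset.sum_comm]
  exact Finset.sum_congr rfl fun j _ => Finset.sum_comm

theorem cyclic_nonabelian_not_compact {L : Type*} [LieRing L] [LieAlgebra ℝ L]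
    [FiniteDimensional ℝ L]
    (B : L →ₗ[ℝ] L →ₗ[ℝ] ℝ)
    (hsymm : ∀ x y : L, B x y = B y x)
    (hpos : ∀ x : L, x ≠ 0 → 0 < B x x)
    (hcyc : ∀ X Y Z : L, B ⁅X, Y⁆ Z + B ⁅Y, Z⁆ X + B ⁅Z, X⁆ Y = 0)
    (hnab : ¬ IsLieAbelian L) :
    ¬ (IsCompl (LieSubmodule.toSubmodule (LieAlgebra.center ℝ L))
          (LieSubmodule.toSubmodule (LieAlgebra.derivedSeries ℝ L 1)) ∧
        LieAlgebra.IsSemisimple ℝ (LieAlgebra.derivedSeries ℝ L 1) ∧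
        (∀ x : LieAlgebra.derivedSeries ℝ L 1, x ≠ 0 →
          killingForm ℝ (LieAlgebra.derivedSeries ℝ L 1) x x < 0)) := by
  rintro ⟨hcompl, hss, hneg⟩
  set s := LieAlgebra.derivedSeries ℝ L 1 with hs
  -- the inner product given by the negative of the Killing form on s
  let core : InnerProductSpace.Core ℝ s :=
    { inner := fun x y => - killingForm ℝ s x y
      conj_inner_symm := fun x y => by
        simpa using (LieModule.traceForm_comm ℝ s s x y).symm ▸ rfl
      re_inner_nonneg := fun x => by
        rcases eq_or_ne x 0 with h | h
        · simp [h]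
        · have := hneg x h; simpa using (neg_nonneg.mpr this.le)
      definite := fun x hx => by
        by_contra h
        have := hneg x h
        simp only [neg_eq_zero] at hx
        rw [hx] at this; exact lt_irrefl 0 this
      add_left := fun x y z => by simp [map_add]; ring
      smul_left := fun x y r => by simp [map_smul] }
  letI : NormedAddCommGroup s := core.toNormedAddCommGroup
  letI : InnerProductSpace ℝ s := InnerProductSpace.ofCore core.toCore
  have hinner : ∀ x y : s, (inner ℝ x y : ℝ) = - killingForm ℝ s x y := fun _ _ => rfl
  -- invariance of the inner product
  have hinv : ∀ a b c : s, (inner ℝ ⁅a, b⁆ c : ℝ) = inner ℝ ⁅b, c⁆ a := by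
    intro a b c
    rw [hinner, hinner, LieModule.traceForm_apply_lie_apply, LieModule.traceForm_comm]
  obtain ⟨n, bb⟩ : ∃ n, Nonempty (OrthonormalBasis (Fin n) ℝ s) :=
    ⟨_, ⟨stdOrthonormalBasis ℝ s⟩⟩
  obtain ⟨bb⟩ := bb
  -- coercion of brackets
  have hco : ∀ a b : s, ((⁅a, b⁆ : s) : L) = ⁅(a : L), (b : L)⁆ := fun _ _ => rfl
  -- the key sum
  have key : ∀ i j : Fin n, (⁅bb i, bb j⁆ : s) = 0 := by
    intro i₀ j₀
    have hS : ∑ i, ∑ j, ∑ k,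
        (inner ℝ ⁅bb i, bb j⁆ (bb k) : ℝ) *
          (B ⁅(bb i : L), (bb j : L)⁆ (bb k) + B ⁅(bb j : L), (bb k : L)⁆ (bb i)
            + B ⁅(bb k : L), (bb i : L)⁆ (bb j)) = 0 := by
      apply Finset.sum_eq_zero; intro i _
      apply Finset.sum_eq_zero; intro j _
      apply Finset.sum_eq_zero; intro k _
      rw [hcyc, mul_zero]
    -- expand into three sums and reindex
    set g : Fin n → Fin n → Fin n → ℝ := fun i j k =>
      (inner ℝ ⁅bb i, bb j⁆ (bb k) : ℝ) * B ⁅(bb i : L), (bb j : L)⁆ (bb k) with hg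
    have hsplit : ∑ i, ∑ j, ∑ k,
        (inner ℝ ⁅bb i, bb j⁆ (bb k) : ℝ) *
          (B ⁅(bb i : L), (bb j : L)⁆ (bb k) + B ⁅(bb j : L), (bb k : L)⁆ (bb i)
            + B ⁅(bb k : L), (bb i : L)⁆ (bb j))
        = (∑ i, ∑ j, ∑ k, g i j k) + (∑ i, ∑ j, ∑ k, g j k i)
          + (∑ i, ∑ j, ∑ k, g k i j) := by
      rw [← Finset.sum_add_distrib, ← Finset.sum_add_distrib]
      apply Finset.sum_congr rfl; intro i _
      rw [← Finset.sum_add_distrib, ← Finset.sum_add_distrib]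
      apply Finset.sum_congr rfl; intro j _
      rw [← Finset.sum_add_distrib, ← Finset.sum_add_distrib]
      apply Finset.sum_congr rfl; intro k _
      simp only [hg]
      rw [mul_add, mul_add]
      congr 2
      · rw [hinv]
      · rw [hinv, hinv]
    have hcy1 : ∑ i, ∑ j, ∑ k, g j k i = ∑ i, ∑ j, ∑ k, g i j k := sum_cyc g
    have hcy2 : ∑ i, ∑ j, ∑ k, g k i j = ∑ i, ∑ j, ∑ k, g i j k := by
      rw [← hcy1]; exact sum_cyc (fun i j k => g j k i)
    rw [hsplit, hcy1, hcy2] at hS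
    have h3 : ∑ i, ∑ j, ∑ k, g i j k = 0 := by linarith
    -- inner sum over k gives B w w
    have hBk : ∀ i j : Fin n, ∑ k, g i j k =
        B ⁅(bb i : L), (bb j : L)⁆ ⁅(bb i : L), (bb j : L)⁆ := by
      intro i j
      have : ∀ k, g i j k
          = B ⁅(bb i : L), (bb j : L)⁆ ((inner ℝ ⁅bb i, bb j⁆ (bb k) : ℝ) • (bb k : L)) := by
        intro k
        rw [hg, map_smul, smul_eq_mul]
      rw [Finset.sum_congr rfl fun k _ => this k, ← map_sum]
      congr 1
      have := bb.sum_repr' ⁅bb i, bb j⁆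
      calc ∑ k, (inner ℝ ⁅bb i, bb j⁆ (bb k) : ℝ) • (bb k : L)
          = ((∑ k, (inner ℝ (bb k) ⁅bb i, bb j⁆ : ℝ) • bb k : s) : L) := by
            push_cast [Submodule.coe_sum]
            apply Finset.sum_congr rfl; intro k _
            rw [real_inner_comm]
        _ = ((⁅bb i, bb j⁆ : s) : L) := by rw [this]
        _ = ⁅(bb i : L), (bb j : L)⁆ := rfl
    have hnonneg : ∀ i j : Fin n, 0 ≤ ∑ k, g i j k := by
      intro i j
      rw [hBk]
      rcases eq_or_ne (⁅(bb i : L), (bb j : L)⁆ : L) 0 with h | h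
      · simp [h]
      · exact (hpos _ h).le
    have hzero : ∀ i j : Fin n, ∑ k, g i j k = 0 := by
      have h1 : ∀ i ∈ Finset.univ, (0:ℝ) ≤ ∑ j, ∑ k, g i j k :=
        fun i _ => Finset.sum_nonneg fun j _ => hnonneg i j
      intro i j
      have h2 := (Finset.sum_eq_zero_iff_of_nonneg h1).mp h3 i (Finset.mem_univ i)
      exact (Finset.sum_eq_zero_iff_of_nonneg fun j _ => hnonneg i j).mp h2 j
        (Finset.mem_univ j)
    have hb0 : ⁅(bb i₀ : L), (bb j₀ : L)⁆ = 0 := by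
      by_contra h
      have := hpos _ h
      rw [← hBk i₀ j₀, hzero i₀ j₀] at this
      exact lt_irrefl 0 this
    ext
    rw [hco]
    simpa using hb0
  -- hence s is abelian
  have habel : ∀ a b : s, ⁅a, b⁆ = (0 : s) := by
    have had : ∀ a : s, (LinearMap.mk₂ ℝ (fun a b : s => ⁅a, b⁆) add_lie smul_lie lie_add lie_smul) a = 0 := by
      have : (LinearMap.mk₂ ℝ (fun a b : s => ⁅a, b⁆) add_lie smul_lie lie_add lie_smul) = 0 := by
        apply bb.toBasis.ext; intro i
        apply bb.toBasis.ext; intro j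
        simpa using key i j
      intro a
      exact congrFun (congrArg DFunLike.coe this) a
    intro a b
    have := congrFun (congrArg DFunLike.coe (had a)) b
    simpa using this
  -- hence L is abelian, contradiction
  apply hnab
  constructor
  intro x y
  have hx : x ∈ LieSubmodule.toSubmodule (LieAlgebra.center ℝ L) ⊔
      LieSubmodule.toSubmodule s := by
    rw [hcompl.codisjoint.eq_top]; trivial
  have hy : y ∈ LieSubmodule.toSubmodule (LieAlgebra.center ℝ L) ⊔
      LieSubmodule.toSubmodule s := by
    rw [hcompl.codisjoint.eq_top]; trivial
  obtain ⟨cx, hcx, ax, hax, rfl⟩ := Submodule.mem_sup.mp hx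
  obtain ⟨cy, hcy', ay, hay, rfl⟩ := Submodule.mem_sup.mp hy
  have h1 : ∀ z : L, ⁅cx, z⁆ = 0 := by
    intro z
    have := (LieModule.mem_maxTrivSubmodule ℝ L L cx).mp hcx z
    rw [← lie_skew, this, neg_zero]
  have h2 : ∀ z : L, ⁅z, cy⁆ = 0 := fun z =>
    (LieModule.mem_maxTrivSubmodule ℝ L L cy).mp hcy' z
  have h3 : ⁅ax, ay⁆ = 0 := by
    have := habel ⟨ax, hax⟩ ⟨ay, hay⟩
    have h4 : ((⁅(⟨ax, hax⟩ : s), (⟨ay, hay⟩ : s)⁆ : s) : L) = ⁅ax, ay⁆ := rfl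
    rw [this] at h4
    simpa using h4.symm
  rw [add_lie, lie_add, lie_add, h1, h1, h2, h3]
  simp
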